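/- Fix i ∈ {1,…,r} with r ≥ 3. The subgroup of GL_r(ℤ) generated by {X_{ik} : k ≠ i} ∪ {X_{ji}² : j ≠ i} ∪ {T_j : j = 1,…,r} contains the principal congruence subgroup Γ₂ of level two. -/

import Mathlib

/-- The elementary matrix `X i j` in `SL_r(ℤ)`: identity plus an extra 1 in position (i,j). -/
def X {r : ℕ} (i j : Fin r) (h : i ≠ j) : Matrix.SpecialLinearGroup (Fin r) ℤ :=
  ⟨Matrix.transvection i j 1, Matrix.det_transvection_of_ne i j h 1⟩

/-- The diagonal matrix `T i` in `GL_r(ℤ)`: identity with a `-1` in the i-th diagonal entry. -/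
def T {r : ℕ} (i : Fin r) : GL (Fin r) ℤ :=
  ⟨Matrix.diagonal (fun k => if k = i then -1 else 1),
   Matrix.diagonal (fun k => if k = i then -1 else 1),
   by
    ext p q
    by_cases hp : p = i <;> by_cases hq : q = i <;> by_cases h : p = q <;>
      simp_all [Matrix.diagonal_mul_diagonal, Matrix.diagonal_apply, Matrix.one_apply],
   by
    ext p q
    by_cases hp : p = i <;> by_cases hq : q = i <;> by_cases h : p = q <;>
      simp_all [Matrix.diagonal_mul_diagonal, Matrix.diagonal_apply, Matrix.one_apply]⟩

/-- The principal congruence subgroup of level 2 in `GL_r(ℤ)`, as the kernel of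
reduction modulo 2. -/
def Gamma2 (r : ℕ) : Subgroup (GL (Fin r) ℤ) :=
  (Units.map ((Int.castRingHom (ZMod 2)).mapMatrix.toMonoidHom)).ker

namespace Gamma2Aux

open Matrix Finset

variable {r : ℕ}

/-- transvection with an arbitrary integer coefficient, as an element of `GL`. -/
def Et (a b : Fin r) (h : a ≠ b) (m : ℤ) : GL (Fin r) ℤ :=
  ⟨Matrix.transvection a b m, Matrix.transvection a b (-m),
   by rw [transvection_mul_transvection_same _ _ h, add_neg_cancel, transvection_zero],
   by rw [transvection_mul_transvection_same _ _ h, neg_add_cancel, transvection_zero]⟩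

@[simp] lemma Et_val (a b : Fin r) (h : a ≠ b) (m : ℤ) :
    (Et a b h m).val = Matrix.transvection a b m := rfl

lemma Et_mul (a b : Fin r) (h : a ≠ b) (m n : ℤ) :
    Et a b h m * Et a b h n = Et a b h (m + n) :=
  Units.ext (transvection_mul_transvection_same _ _ h m n)

lemma Et_zero (a b : Fin r) (h : a ≠ b) : Et a b h 0 = 1 :=
  Units.ext (transvection_zero _ _)

lemma Et_inv (a b : Fin r) (h : a ≠ b) (m : ℤ) : (Et a b h m)⁻¹ = Et a b h (-m) := by
  rw [eq_comm, eq_inv_iff_mul_eq_one, Et_mul, neg_add_cancel, Et_zero]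

lemma Et_pow (a b : Fin r) (h : a ≠ b) (m : ℤ) (n : ℕ) :
    (Et a b h m) ^ n = Et a b h (n * m) := by
  induction n with
  | zero => simp [Et_zero]
  | succ k ih => rw [pow_succ, ih, Et_mul]; congr 1; push_cast; ring

lemma Et_mem {H : Subgroup (GL (Fin r) ℤ)} {a b : Fin r} {h : a ≠ b} {m : ℤ}
    (hm : Et a b h m ∈ H) (n : ℤ) : Et a b h (n * m) ∈ H := by
  rcases le_or_gt 0 n with hn | hn
  · lift n to ℕ using hn
    rw [← Et_pow]; exact pow_mem hm _
  · have h1 : Et a b h (n * m) = (Et a b h ((-n) * m))⁻¹ := by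
      rw [Et_inv]; congr 1; ring
    rw [h1]
    refine inv_mem ?_
    have h2 : (0:ℤ) ≤ -n := by omega
    lift (-n) to ℕ using h2 with k hk
    rw [← Et_pow]; exact pow_mem hm _

private def E1 (x y : Fin r) : Matrix (Fin r) (Fin r) ℤ := single x y 1

private lemma E1_mul_same (x y z : Fin r) : E1 x y * E1 y z = E1 x z := by
  simp [E1, single_mul_single_same]

private lemma E1_mul_ne {y z : Fin r} (h : y ≠ z) (x w : Fin r) : E1 x y * E1 z w = 0 :=
  single_mul_single_of_ne (c := (1 : ℤ)) x y z h 1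

private lemma transvection_eq (x y : Fin r) (c : ℤ) :
    Matrix.transvection x y c = 1 + c • E1 x y := by
  rw [Matrix.transvection, E1, smul_single, smul_eq_mul, mul_one]

lemma trans_comm (a b c : Fin r) (hab : a ≠ b) (hbc : b ≠ c) (hac : a ≠ c) :
    Matrix.transvection a b 2 * Matrix.transvection b c 1 * Matrix.transvection a b (-2) *
      Matrix.transvection b c (-1) = Matrix.transvection a c (2 : ℤ) := by
  simp only [transvection_eq]
  simp only [Matrix.add_mul, Matrix.mul_add, Matrix.one_mul, Matrix.mul_one,
    Matrix.smul_mul, Matrix.mul_smul, E1_mul_same, E1_mul_ne hbc, E1_mul_ne hbc.symm,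
    E1_mul_ne hab, E1_mul_ne hab.symm, E1_mul_ne hac, E1_mul_ne hac.symm,
    smul_zero, add_zero, zero_add]
  module

lemma mem_Gamma2_iff (A : GL (Fin r) ℤ) :
    A ∈ Gamma2 r ↔ ∀ p q : Fin r, ((A.val p q : ZMod 2)) = if p = q then 1 else 0 := by
  rw [Gamma2, MonoidHom.mem_ker, Units.ext_iff]
  constructor
  · intro h p q
    have := congrFun (congrFun h p) q
    simpa [Matrix.one_apply, RingHom.mapMatrix_apply, Matrix.map_apply] using this
  · intro h
    ext p q
    simpa [Matrix.one_apply, RingHom.mapMatrix_apply, Matrix.map_apply] using h p q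

lemma int_cast_zmod2_eq_zero_iff (x : ℤ) : (x : ZMod 2) = 0 ↔ 2 ∣ x :=
  ZMod.intCast_zmod_eq_zero_iff_dvd x 2

lemma int_cast_zmod2_eq_one_iff (x : ℤ) : (x : ZMod 2) = 1 ↔ x % 2 = 1 := by
  have h : ((x - 1 : ℤ) : ZMod 2) = 0 ↔ 2 ∣ (x - 1) := ZMod.intCast_zmod_eq_zero_iff_dvd _ 2
  push_cast at h
  rw [sub_eq_zero] at h
  rw [h]
  omega

lemma odd_diag_of_mem {A : GL (Fin r) ℤ} (hA : A ∈ Gamma2 r) (p : Fin r) :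
    A.val p p % 2 = 1 := by
  have := (mem_Gamma2_iff A).mp hA p p
  simp only [if_pos rfl] at this
  exact (int_cast_zmod2_eq_one_iff _).mp this

lemma even_off_of_mem {A : GL (Fin r) ℤ} (hA : A ∈ Gamma2 r) {p q : Fin r} (h : p ≠ q) :
    2 ∣ A.val p q := by
  have := (mem_Gamma2_iff A).mp hA p q
  rw [if_neg h] at this
  exact (int_cast_zmod2_eq_zero_iff _).mp this

lemma transvection_apply' (a b : Fin r) (c : ℤ) (p q : Fin r) :
    Matrix.transvection a b c p q =
      (if p = q then 1 else 0) + (if p = a ∧ q = b then c else 0) := by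
  rw [Matrix.transvection, Matrix.add_apply, Matrix.one_apply, Matrix.single]
  simp [eq_comm]

lemma Et_mem_Gamma2 (a b : Fin r) (h : a ≠ b) (m : ℤ) : Et a b h (2 * m) ∈ Gamma2 r := by
  rw [mem_Gamma2_iff]
  intro p q
  show ((Matrix.transvection a b (2*m) p q : ℤ) : ZMod 2) = _
  rw [transvection_apply']
  split_ifs <;> push_cast <;> simp [show ((2:ZMod 2)) = 0 from rfl]

lemma T_val (j : Fin r) : (T j).val = Matrix.diagonal (fun k => if k = j then -1 else 1) := rfl

lemma T_mem_Gamma2 (j : Fin r) : T j ∈ Gamma2 r := by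
  rw [mem_Gamma2_iff]
  intro p q
  rw [T_val, Matrix.diagonal_apply]
  split_ifs <;> push_cast <;> simp [CharTwo.neg_eq]

/-! ### The generating set -/

def gens (r : ℕ) (i : Fin r) : Set (GL (Fin r) ℤ) :=
  {A | ∃ k : Fin r, ∃ h : i ≠ k, A = (X i k h).toGL} ∪
  {A | ∃ j : Fin r, ∃ h : j ≠ i, A = (X j i h).toGL ^ 2} ∪
  {A | ∃ j : Fin r, A = T j}

def Hcl (r : ℕ) (i : Fin r) : Subgroup (GL (Fin r) ℤ) := Subgroup.closure (gens r i)

lemma X_toGL (a b : Fin r) (h : a ≠ b) : (X a b h).toGL = Et a b h 1 := Units.ext rfl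

lemma X_toGL_sq (a b : Fin r) (h : a ≠ b) : (X a b h).toGL ^ 2 = Et a b h 2 := by
  rw [X_toGL, sq, Et_mul]; norm_num

lemma T_mem (i : Fin r) (j : Fin r) : T j ∈ Hcl r i :=
  Subgroup.subset_closure (Or.inr ⟨j, rfl⟩)

lemma row_mem (i : Fin r) (k : Fin r) (h : i ≠ k) (m : ℤ) : Et i k h m ∈ Hcl r i := by
  have h1 : Et i k h 1 ∈ Hcl r i :=
    Subgroup.subset_closure (Or.inl (Or.inl ⟨k, h, (X_toGL i k h).symm⟩))
  simpa using Et_mem h1 m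

lemma even_mem (i : Fin r) (a b : Fin r) (h : a ≠ b) (m : ℤ) :
    Et a b h (2 * m) ∈ Hcl r i := by
  have base : Et a b h 2 ∈ Hcl r i := by
    by_cases hai : a = i
    · subst hai; exact row_mem a b h 2
    · by_cases hbi : b = i
      · subst hbi
        exact Subgroup.subset_closure (Or.inl (Or.inr ⟨a, h, (X_toGL_sq a b h).symm⟩))
      · have hai' : a ≠ i := hai
        have hib : i ≠ b := fun e => hbi e.symm
        have key : Et a b h 2 =
            Et a i hai' 2 * Et i b hib 1 * Et a i hai' (-2) * Et i b hib (-1) := by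
          apply Units.ext
          simp only [Units.val_mul, Et_val]
          exact (trans_comm a i b hai' hib h).symm
        have e2 : Et a i hai' 2 ∈ Hcl r i :=
          Subgroup.subset_closure (Or.inl (Or.inr ⟨a, hai', (X_toGL_sq a i hai').symm⟩))
        have em2 : Et a i hai' (-2) ∈ Hcl r i := by
          rw [← Et_inv]; exact inv_mem e2
        rw [key]
        exact mul_mem (mul_mem (mul_mem e2 (row_mem i b hib 1)) em2) (row_mem i b hib (-1))
  rw [mul_comm]; exact Et_mem base m

/-! ### Multiplication entry formulas -/

lemma Et_mul_val (p q : Fin r) (h : p ≠ q) (m : ℤ) (A : GL (Fin r) ℤ) (x y : Fin r) :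
    (Et p q h m * A).val x y =
      if x = p then A.val p y + m * A.val q y else A.val x y := by
  rw [Units.val_mul, Et_val]
  by_cases hx : x = p
  · subst hx; rw [if_pos rfl, transvection_mul_apply_same]
  · rw [if_neg hx, transvection_mul_apply_of_ne _ _ _ _ hx]

lemma mul_Et_val (p q : Fin r) (h : p ≠ q) (m : ℤ) (A : GL (Fin r) ℤ) (x y : Fin r) :
    (A * Et p q h m).val x y =
      if y = q then A.val x q + m * A.val x p else A.val x y := by
  rw [Units.val_mul, Et_val]
  by_cases hy : y = q
  · subst hy; rw [if_pos rfl, mul_transvection_apply_same]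
  · rw [if_neg hy, mul_transvection_apply_of_ne _ _ _ _ hy]

lemma T_mul_val (c : Fin r) (A : GL (Fin r) ℤ) (x y : Fin r) :
    (T c * A).val x y = (if x = c then -1 else 1) * A.val x y := by
  rw [Units.val_mul, T_val, Matrix.diagonal_mul]

/-! ### Finished indices -/

def finished (S : Finset (Fin r)) (A : GL (Fin r) ℤ) : Prop :=
  ∀ s ∈ S, (∀ j : Fin r, A.val j s = if j = s then 1 else 0) ∧
           (∀ j : Fin r, A.val s j = if s = j then 1 else 0)

lemma finished_col {S : Finset (Fin r)} {A : GL (Fin r) ℤ} (hf : finished S A)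
    {s : Fin r} (hs : s ∈ S) (j : Fin r) : A.val j s = if j = s then 1 else 0 :=
  (hf s hs).1 j

lemma finished_row {S : Finset (Fin r)} {A : GL (Fin r) ℤ} (hf : finished S A)
    {s : Fin r} (hs : s ∈ S) (j : Fin r) : A.val s j = if s = j then 1 else 0 :=
  (hf s hs).2 j

lemma finished_mul_left_Et {S : Finset (Fin r)} {A : GL (Fin r) ℤ} (hf : finished S A)
    {p q : Fin r} (hpq : p ≠ q) (hp : p ∉ S) (hq : q ∉ S) (m : ℤ) :
    finished S (Et p q hpq m * A) := by
  intro s hs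
  have hps : p ≠ s := fun e => hp (e ▸ hs)
  have hqs : q ≠ s := fun e => hq (e ▸ hs)
  constructor
  · intro j
    rw [Et_mul_val]
    by_cases hj : j = p
    · rw [if_pos hj, hj, finished_col hf hs p, finished_col hf hs q,
        if_neg hps, if_neg hqs]
      ring
    · rw [if_neg hj, finished_col hf hs j]
  · intro j
    rw [Et_mul_val, if_neg (fun e => hps e.symm), finished_row hf hs j]

lemma finished_mul_right_Et {S : Finset (Fin r)} {A : GL (Fin r) ℤ} (hf : finished S A)
    {p q : Fin r} (hpq : p ≠ q) (hp : p ∉ S) (hq : q ∉ S) (m : ℤ) :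
    finished S (A * Et p q hpq m) := by
  intro s hs
  have hps : p ≠ s := fun e => hp (e ▸ hs)
  have hqs : q ≠ s := fun e => hq (e ▸ hs)
  constructor
  · intro j
    rw [mul_Et_val, if_neg hqs.symm, finished_col hf hs j]
  · intro j
    rw [mul_Et_val]
    by_cases hj : j = q
    · rw [if_pos hj, hj, finished_row hf hs q, finished_row hf hs p,
        if_neg (show ¬ s = q from fun e => hqs e.symm),
        if_neg (show ¬ s = p from fun e => hps e.symm)]
      ring
    · rw [if_neg hj, finished_row hf hs j]

lemma finished_mul_left_T {S : Finset (Fin r)} {A : GL (Fin r) ℤ} (hf : finished S A)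
    {c : Fin r} (hc : c ∉ S) : finished S (T c * A) := by
  intro s hs
  have hcs : c ≠ s := fun e => hc (e ▸ hs)
  constructor
  · intro j
    rw [T_mul_val]
    by_cases hj : j = c
    · rw [if_pos hj, hj, finished_col hf hs c, if_neg hcs]
      ring
    · rw [if_neg hj, finished_col hf hs j, one_mul]
  · intro j
    rw [T_mul_val, if_neg (fun e => hcs e.symm), one_mul, finished_row hf hs j]

/-! ### Phase 1: clearing a column -/

lemma phase1 (i : Fin r) (S : Finset (Fin r)) (c : Fin r) (hc : c ∉ S) :
    ∀ N : ℕ, ∀ A : GL (Fin r) ℤ, A ∈ Gamma2 r → finished S A →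
      (∑ j, (A.val j c).natAbs) ≤ N →
      ∃ B : GL (Fin r) ℤ, B ∈ Gamma2 r ∧ finished S B ∧
        (∀ j, j ≠ c → B.val j c = 0) ∧ (B ∈ Hcl r i → A ∈ Hcl r i) := by
  intro N
  induction N with
  | zero =>
    intro A hA hf hsum
    exfalso
    have h1 : (A.val c c).natAbs ≤ ∑ j, (A.val j c).natAbs :=
      Finset.single_le_sum (f := fun j => (A.val j c).natAbs) (fun _ _ => Nat.zero_le _)
        (Finset.mem_univ c)
    have h2 := odd_diag_of_mem hA c
    omega
  | succ N ih =>
    intro A hA hf hsum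
    by_cases hz : ∀ j, j ≠ c → A.val j c = 0
    · exact ⟨A, hA, hf, hz, id⟩
    · push_neg at hz
      obtain ⟨j, hjc, hjne⟩ := hz
      have hjS : j ∉ S := fun hj => hjne (by rw [finished_row hf hj c, if_neg hjc])
      have ha := odd_diag_of_mem hA c
      obtain ⟨b2, hb2⟩ := even_off_of_mem hA hjc
      rcases le_or_gt (A.val c c).natAbs (A.val j c).natAbs with hcmp | hcmp
      · -- reduce the off-diagonal entry
        obtain ⟨s, hs⟩ : ∃ s : ℤ,
            (A.val j c + 2 * s * A.val c c).natAbs < (A.val j c).natAbs := by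
          refine ⟨if (0 ≤ A.val c c) = (0 ≤ A.val j c) then -1 else 1, ?_⟩
          split_ifs with h <;> simp only [eq_iff_iff] at h <;> omega
        set A' := Et j c hjc (2 * s) * A with hA'def
        have hval : ∀ x y, A'.val x y =
            if x = j then A.val j y + 2 * s * A.val c y else A.val x y := fun x y =>
          Et_mul_val j c hjc (2*s) A x y
        have hmem : A' ∈ Gamma2 r := mul_mem (Et_mem_Gamma2 j c hjc s) hA
        have hfin' : finished S A' := finished_mul_left_Et hf hjc hjS hc (2*s)
        have hsum' : (∑ p, (A'.val p c).natAbs) ≤ N := by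
          have hlt : (∑ p, (A'.val p c).natAbs) < ∑ p, (A.val p c).natAbs := by
            rw [← Finset.sum_erase_add _ _ (Finset.mem_univ j),
                ← Finset.sum_erase_add _ _ (Finset.mem_univ j)]
            have heq : ∑ p ∈ Finset.univ.erase j, (A'.val p c).natAbs =
                ∑ p ∈ Finset.univ.erase j, (A.val p c).natAbs := by
              refine Finset.sum_congr rfl fun p hp => ?_
              rw [hval, if_neg (Finset.mem_erase.mp hp).1]
            have hj' : A'.val j c = A.val j c + 2 * s * A.val c c := by
              rw [hval, if_pos rfl]
            rw [heq, hj']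
            exact Nat.add_lt_add_left hs _
          omega
        obtain ⟨B, hB1, hB2, hB3, hB4⟩ := ih A' hmem hfin' hsum'
        refine ⟨B, hB1, hB2, hB3, fun hB => ?_⟩
        have hA'mem : A' ∈ Hcl r i := hB4 hB
        have hrec : A = (Et j c hjc (2 * s))⁻¹ * A' := by
          rw [hA'def, inv_mul_cancel_left]
        rw [hrec]
        exact mul_mem (inv_mem (even_mem i j c hjc s)) hA'mem
      · -- reduce the diagonal entry
        have hcj : c ≠ j := fun e => hjc e.symm
        obtain ⟨s, hs⟩ : ∃ s : ℤ,
            (A.val c c + 2 * s * A.val j c).natAbs < (A.val c c).natAbs := by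
          refine ⟨if (0 ≤ A.val c c) = (0 ≤ A.val j c) then -1 else 1, ?_⟩
          have hne : A.val j c ≠ 0 := hjne
          split_ifs with h <;> simp only [eq_iff_iff] at h <;> omega
        set A' := Et c j hcj (2 * s) * A with hA'def
        have hval : ∀ x y, A'.val x y =
            if x = c then A.val c y + 2 * s * A.val j y else A.val x y := fun x y =>
          Et_mul_val c j hcj (2*s) A x y
        have hmem : A' ∈ Gamma2 r := mul_mem (Et_mem_Gamma2 c j hcj s) hA
        have hfin' : finished S A' := finished_mul_left_Et hf hcj hc hjS (2*s)
        have hsum' : (∑ p, (A'.val p c).natAbs) ≤ N := by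
          have hlt : (∑ p, (A'.val p c).natAbs) < ∑ p, (A.val p c).natAbs := by
            rw [← Finset.sum_erase_add _ _ (Finset.mem_univ c),
                ← Finset.sum_erase_add _ _ (Finset.mem_univ c)]
            have heq : ∑ p ∈ Finset.univ.erase c, (A'.val p c).natAbs =
                ∑ p ∈ Finset.univ.erase c, (A.val p c).natAbs := by
              refine Finset.sum_congr rfl fun p hp => ?_
              rw [hval, if_neg (Finset.mem_erase.mp hp).1]
            have hj' : A'.val c c = A.val c c + 2 * s * A.val j c := by
              rw [hval, if_pos rfl]
            rw [heq, hj']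
            exact Nat.add_lt_add_left hs _
          omega
        obtain ⟨B, hB1, hB2, hB3, hB4⟩ := ih A' hmem hfin' hsum'
        refine ⟨B, hB1, hB2, hB3, fun hB => ?_⟩
        have hA'mem : A' ∈ Hcl r i := hB4 hB
        have hrec : A = (Et c j hcj (2 * s))⁻¹ * A' := by
          rw [hA'def, inv_mul_cancel_left]
        rw [hrec]
        exact mul_mem (inv_mem (even_mem i c j hcj s)) hA'mem

/-! ### The diagonal entry is a unit after clearing the column -/

lemma diag_unit {A : GL (Fin r) ℤ} (c : Fin r)
    (hcol : ∀ j, j ≠ c → A.val j c = 0) : A.val c c = 1 ∨ A.val c c = -1 := by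
  have h2 : ((↑A⁻¹ : Matrix (Fin r) (Fin r) ℤ) * (↑A : Matrix (Fin r) (Fin r) ℤ)) c c
      = (1 : Matrix (Fin r) (Fin r) ℤ) c c := by rw [Units.inv_mul]
  rw [Matrix.mul_apply, Matrix.one_apply_eq] at h2
  rw [Finset.sum_eq_single c (fun b _ hb => by rw [hcol b hb, mul_zero])
    (fun h => absurd (Finset.mem_univ c) h)] at h2
  have : IsUnit (A.val c c) :=
    IsUnit.of_mul_eq_one _ (by rw [mul_comm]; exact h2)
  exact Int.isUnit_iff.mp this

/-! ### Promoting an index to finished -/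

lemma finished_insert {S : Finset (Fin r)} {A : GL (Fin r) ℤ} (c : Fin r)
    (hf : finished S A) (hcol : ∀ j, j ≠ c → A.val j c = 0) (hdiag : A.val c c = 1)
    (hrow : ∀ k, k ≠ c → A.val c k = 0) : finished (insert c S) A := by
  intro s hs
  rcases Finset.mem_insert.mp hs with rfl | hs'
  · constructor
    · intro j
      by_cases hj : j = s
      · rw [if_pos hj, hj]; exact hdiag
      · rw [if_neg hj]; exact hcol j hj
    · intro j
      by_cases hj : s = j
      · rw [if_pos hj, ← hj]; exact hdiag
      · rw [if_neg hj]; exact hrow j (fun e => hj e.symm)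
  · exact hf s hs'

/-! ### Phase 2: clearing a row -/

lemma phase2 (i : Fin r) (S : Finset (Fin r)) (c : Fin r) (hc : c ∉ S) :
    ∀ N : ℕ, ∀ A : GL (Fin r) ℤ, A ∈ Gamma2 r → finished S A →
      (∀ j, j ≠ c → A.val j c = 0) → A.val c c = 1 →
      (∑ k, if k = c then 0 else (A.val c k).natAbs) ≤ N →
      ∃ B, B ∈ Gamma2 r ∧ finished (insert c S) B ∧ (B ∈ Hcl r i → A ∈ Hcl r i) := by
  intro N
  induction N with
  | zero =>
    intro A hA hf hcol hdiag hsum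
    have hrow : ∀ k, k ≠ c → A.val c k = 0 := by
      intro k hk
      have h1 : (if k = c then 0 else (A.val c k).natAbs) ≤
          ∑ t, if t = c then 0 else (A.val c t).natAbs :=
        Finset.single_le_sum (f := fun t => if t = c then 0 else (A.val c t).natAbs)
          (fun _ _ => Nat.zero_le _) (Finset.mem_univ k)
      rw [if_neg hk] at h1
      omega
    exact ⟨A, hA, finished_insert c hf hcol hdiag hrow, id⟩
  | succ N ih =>
    intro A hA hf hcol hdiag hsum
    by_cases hz : ∀ k, k ≠ c → A.val c k = 0
    · exact ⟨A, hA, finished_insert c hf hcol hdiag hz, id⟩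
    · push_neg at hz
      obtain ⟨k, hkc, hkne⟩ := hz
      have hck : c ≠ k := fun e => hkc e.symm
      have hkS : k ∉ S := fun hk => hkne (by rw [finished_col hf hk c, if_neg hck])
      obtain ⟨m, hm⟩ := even_off_of_mem hA hck
      set A' := A * Et c k hck (2 * (-m)) with hA'def
      have hval : ∀ x y, A'.val x y =
          if y = k then A.val x k + 2 * (-m) * A.val x c else A.val x y := fun x y =>
        mul_Et_val c k hck (2 * (-m)) A x y
      have hmem : A' ∈ Gamma2 r := mul_mem hA (Et_mem_Gamma2 c k hck (-m))
      have hfin' : finished S A' := finished_mul_right_Et hf hck hc hkS _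
      have hck0 : A'.val c k = 0 := by
        rw [hval, if_pos rfl, hdiag, hm]; ring
      have hoff : ∀ x y, ¬(x = c ∧ y = k) → A'.val x y = A.val x y := by
        intro x y hxy
        rw [hval]
        by_cases hy : y = k
        · rw [if_pos hy]
          have hx : x ≠ c := fun e => hxy ⟨e, hy⟩
          rw [hcol x hx]
          ring_nf
          rw [hy]
        · rw [if_neg hy]
      have hcol' : ∀ j, j ≠ c → A'.val j c = 0 := by
        intro j hj
        rw [hoff j c (fun e => hck (e.2.symm ▸ rfl)), hcol j hj]
      have hdiag' : A'.val c c = 1 := by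
        rw [hoff c c (fun e => hck e.2), hdiag]
      have hsum' : (∑ t, if t = c then 0 else (A'.val c t).natAbs) ≤ N := by
        have hlt : (∑ t, if t = c then 0 else (A'.val c t).natAbs) <
            ∑ t, if t = c then 0 else (A.val c t).natAbs := by
          rw [← Finset.sum_erase_add _ _ (Finset.mem_univ k),
              ← Finset.sum_erase_add _ _ (Finset.mem_univ k)]
          have heq : (∑ t ∈ Finset.univ.erase k, if t = c then 0 else (A'.val c t).natAbs) =
              ∑ t ∈ Finset.univ.erase k, if t = c then 0 else (A.val c t).natAbs := by
            refine Finset.sum_congr rfl fun t ht => ?_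
            have htk : t ≠ k := (Finset.mem_erase.mp ht).1
            by_cases htc : t = c
            · rw [if_pos htc, if_pos htc]
            · rw [if_neg htc, if_neg htc, hoff c t (fun e => htk e.2)]
          rw [heq, if_neg hkc, if_neg hkc, hck0]
          have : 0 < (A.val c k).natAbs := by
            have := hkne; omega
          omega
        omega
      obtain ⟨B, hB1, hB2, hB3⟩ := ih A' hmem hfin' hcol' hdiag' hsum'
      refine ⟨B, hB1, hB2, fun hB => ?_⟩
      have hA'mem : A' ∈ Hcl r i := hB3 hB
      have hrec : A = A' * (Et c k hck (2 * (-m)))⁻¹ := by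
        rw [hA'def, mul_inv_cancel_right]
      rw [hrec]
      exact mul_mem hA'mem (inv_mem (even_mem i c k hck (-m)))

/-! ### One full step -/

lemma step (i : Fin r) (S : Finset (Fin r)) (c : Fin r) (hc : c ∉ S)
    (A : GL (Fin r) ℤ) (hA : A ∈ Gamma2 r) (hf : finished S A) :
    ∃ B, B ∈ Gamma2 r ∧ finished (insert c S) B ∧ (B ∈ Hcl r i → A ∈ Hcl r i) := by
  obtain ⟨B1, h1, h2, h3, h4⟩ := phase1 i S c hc (∑ j, (A.val j c).natAbs) A hA hf le_rfl
  rcases diag_unit c h3 with hd | hd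
  · obtain ⟨B, g1, g2, g3⟩ :=
      phase2 i S c hc (∑ k, if k = c then 0 else (B1.val c k).natAbs) B1 h1 h2 h3 hd le_rfl
    exact ⟨B, g1, g2, fun hB => h4 (g3 hB)⟩
  · set B2 := T c * B1 with hB2def
    have hv : ∀ x y, B2.val x y = (if x = c then -1 else 1) * B1.val x y :=
      fun x y => T_mul_val c B1 x y
    have hcol2 : ∀ j, j ≠ c → B2.val j c = 0 := fun j hj => by
      rw [hv, h3 j hj, mul_zero]
    have hdiag2 : B2.val c c = 1 := by rw [hv, if_pos rfl, hd]; ring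
    have hmem2 : B2 ∈ Gamma2 r := mul_mem (T_mem_Gamma2 c) h1
    have hfin2 : finished S B2 := finished_mul_left_T h2 hc
    obtain ⟨B, g1, g2, g3⟩ :=
      phase2 i S c hc (∑ k, if k = c then 0 else (B2.val c k).natAbs) B2 hmem2 hfin2
        hcol2 hdiag2 le_rfl
    refine ⟨B, g1, g2, fun hB => ?_⟩
    have hrec : B1 = (T c)⁻¹ * B2 := by rw [hB2def, inv_mul_cancel_left]
    exact h4 (hrec ▸ mul_mem (inv_mem (T_mem i c)) (g3 hB))

/-! ### The main induction -/

lemma main (i : Fin r) : ∀ n : ℕ, ∀ S : Finset (Fin r), (Finset.univ \ S).card ≤ n →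
    ∀ A : GL (Fin r) ℤ, A ∈ Gamma2 r → finished S A → A ∈ Hcl r i := by
  intro n
  induction n with
  | zero =>
    intro S hcard A hA hf
    have hall : ∀ x : Fin r, x ∈ S := by
      intro x
      by_contra hx
      have hx2 : x ∈ Finset.univ \ S := Finset.mem_sdiff.mpr ⟨Finset.mem_univ x, hx⟩
      have := Finset.card_pos.mpr ⟨x, hx2⟩
      omega
    have hone : A = 1 := by
      apply Units.ext
      ext p q
      rw [finished_col hf (hall q) p, Units.val_one, Matrix.one_apply]
    rw [hone]; exact one_mem _
  | succ n ih =>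
    intro S hcard A hA hf
    by_cases hfull : ∀ x : Fin r, x ∈ S
    · have hone : A = 1 := by
        apply Units.ext
        ext p q
        rw [finished_col hf (hfull q) p, Units.val_one, Matrix.one_apply]
      rw [hone]; exact one_mem _
    · push_neg at hfull
      obtain ⟨c, hc⟩ := hfull
      obtain ⟨B, g1, g2, g3⟩ := step i S c hc A hA hf
      apply g3
      have hsub : Finset.univ \ insert c S ⊂ Finset.univ \ S := by
        refine (Finset.ssubset_iff_of_subset
          (Finset.sdiff_subset_sdiff (le_refl _) (Finset.subset_insert c S))).mpr ?_
        exact ⟨c, Finset.mem_sdiff.mpr ⟨Finset.mem_univ c, hc⟩,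
          fun hmem => (Finset.mem_sdiff.mp hmem).2 (Finset.mem_insert_self c S)⟩
      have hcard' := Finset.card_lt_card hsub
      exact ih (insert c S) (by omega) B g1 g2

end Gamma2Aux

theorem gamma2_le_closure_of_fixed_row_column (r : ℕ) (hr : 3 ≤ r) (i : Fin r) :
    Gamma2 r ≤
      Subgroup.closure
        ({A | ∃ k : Fin r, ∃ h : i ≠ k, A = (X i k h).toGL} ∪
         {A | ∃ j : Fin r, ∃ h : j ≠ i, A = (X j i h).toGL ^ 2} ∪
         {A | ∃ j : Fin r, A = T j}) := by
  intro A hA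
  have h0 : Gamma2Aux.finished (∅ : Finset (Fin r)) A :=
    fun s hs => absurd hs (Finset.notMem_empty s)
  exact Gamma2Aux.main i (Finset.univ \ (∅ : Finset (Fin r))).card ∅ le_rfl A hA h0
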